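/- Let β be a finite type with decidable equality, let Q : Matrix Unit β (ZMod 2) and let R : Matrix β β (ZMod 2) be symmetric. Let A := Matrix.fromBlocks (1 : Matrix Unit Unit (ZMod 2)) Q Qᵀ R : Matrix (Unit ⊕ β) (Unit ⊕ β) (ZMod 2) (the adjacency matrix of a graph whose first vertex has a loop). Then A.rank = 1 + (R - Qᵀ * Q).rank. (The positive rule reduces the binary rank by exactly 1, the number of vertices removed.) -/

import Mathlib

open Matrix

section aux
variable {K : Type*} [Field K]

lemma range_prodMap' {M N M' N' : Type*} [AddCommGroup M] [AddCommGroup N]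
    [AddCommGroup M'] [AddCommGroup N'] [Module K M] [Module K N] [Module K M'] [Module K N']
    (f : M →ₗ[K] M') (g : N →ₗ[K] N') :
    LinearMap.range (f.prodMap g) = (LinearMap.range f).prod (LinearMap.range g) := by
  ext ⟨x, y⟩
  constructor
  · rintro ⟨⟨a, b⟩, h⟩
    rw [LinearMap.prodMap_apply] at h
    exact ⟨⟨a, congrArg Prod.fst h⟩, ⟨b, congrArg Prod.snd h⟩⟩
  · rintro ⟨⟨a, rfl⟩, ⟨b, rfl⟩⟩
    exact ⟨(a, b), rfl⟩

/-- The product of two submodules is equivalent to the product of the submodules. -/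
def prodEquivProd {M N : Type*} [AddCommGroup M] [AddCommGroup N] [Module K M] [Module K N]
    (p : Submodule K M) (q : Submodule K N) : (p.prod q) ≃ₗ[K] p × q where
  toFun x := (⟨x.1.1, x.2.1⟩, ⟨x.1.2, x.2.2⟩)
  invFun x := ⟨(x.1.1, x.2.1), x.1.2, x.2.2⟩
  map_add' _ _ := rfl
  map_smul' _ _ := rfl
  left_inv _ := rfl
  right_inv _ := rfl

lemma finrank_prod_submodule {M N : Type*} [AddCommGroup M] [AddCommGroup N]
    [Module K M] [Module K N] [FiniteDimensional K M] [FiniteDimensional K N]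
    (p : Submodule K M) (q : Submodule K N) :
    Module.finrank K (p.prod q) = Module.finrank K p + Module.finrank K q := by
  rw [(prodEquivProd p q).finrank_eq, Module.finrank_prod]

lemma rank_fromBlocks_diag {m n : Type*} [Fintype m] [Fintype n] [DecidableEq m] [DecidableEq n]
    (A : Matrix m m K) (D : Matrix n n K) :
    (fromBlocks A 0 0 D).rank = A.rank + D.rank := by
  classical
  let b : Module.Basis m K (m → K) := Pi.basisFun K m
  let b' : Module.Basis n K (n → K) := Pi.basisFun K n
  have key : toLin (b.prod b') (b.prod b') (fromBlocks A 0 0 D) =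
      (toLin b b A).prodMap (toLin b' b' D) := by
    apply (LinearMap.toMatrix (b.prod b') (b.prod b')).injective
    rw [LinearMap.toMatrix_prodMap, LinearMap.toMatrix_toLin, LinearMap.toMatrix_toLin,
      LinearMap.toMatrix_toLin]
  rw [rank_eq_finrank_range_toLin _ (b.prod b') (b.prod b'), key, range_prodMap',
    finrank_prod_submodule, ← rank_eq_finrank_range_toLin, ← rank_eq_finrank_range_toLin]

end aux

/-- the positive rule reduces the binary rank by exactly 1:
`rank (fromBlocks 1 Q Qᵀ R) = 1 + rank (R - Qᵀ * Q)`. -/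
theorem stmt_13 {β : Type*} [Fintype β] [DecidableEq β]
    (Q : Matrix Unit β (ZMod 2)) (R : Matrix β β (ZMod 2)) (hR : Rᵀ = R) :
    (Matrix.fromBlocks (1 : Matrix Unit Unit (ZMod 2)) Q Qᵀ R).rank =
      1 + (R - Qᵀ * Q).rank := by
  have h1 : Invertible (1 : Matrix Unit Unit (ZMod 2)) := invertibleOne
  rw [fromBlocks_eq_of_invertible₁₁]
  have hL : IsUnit (fromBlocks (1 : Matrix Unit Unit (ZMod 2)) 0 (Qᵀ * ⅟(1 : Matrix Unit Unit (ZMod 2))) 1).det := by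
    rw [det_fromBlocks_zero₁₂]
    simp
  have hU : IsUnit (fromBlocks (1 : Matrix Unit Unit (ZMod 2)) (⅟(1 : Matrix Unit Unit (ZMod 2)) * Q) 0 1).det := by
    rw [det_fromBlocks_zero₂₁]
    simp
  rw [rank_mul_eq_left_of_isUnit_det _ _ hU, rank_mul_eq_right_of_isUnit_det _ _ hL,
    rank_fromBlocks_diag]
  have : ⅟(1 : Matrix Unit Unit (ZMod 2)) = 1 := invOf_one
  rw [this, Matrix.mul_one, rank_one]
  simp
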